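/- Let 𝒯 be a slice of l-subsets of [n] and l ≤ k ≤ n-l. Then the collection C_k(𝒯) of l-ple interval k-subsets of [n] whose left endpoint sets lie in 𝒯 is pairwise non-l-intertwining. -/

import Mathlib

/-- The position of `x` in the cyclic order on `ℤ/n` starting at `i`. -/
def ord {n : ℕ} (i x : ZMod n) : ℕ := (x - i).val

/-- Two finite sets of naturals intertwine: they have the same cardinality and their
sorted elements satisfy `a₁ < b₁ < a₂ < b₂ < ⋯ < a_l < b_l`. -/
def NatIntertwines (A B : Finset ℕ) : Prop :=
  A.card = B.card ∧
    List.Chain' (· < ·)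
      (((A.sort (· ≤ ·)).zip (B.sort (· ≤ ·))).flatMap fun p => [p.1, p.2])

/-- Two finite subsets of `ℤ/n` intertwine under some cyclic ordering of `[n]`. -/
def CycIntertwines {n : ℕ} (A B : Finset (ZMod n)) : Prop :=
  ∃ i : ZMod n, NatIntertwines (A.image (ord i)) (B.image (ord i))

/-- Two subsets `I`, `J` of `ℤ/n` are (cyclically) `l`-intertwining: there are
`l`-subsets `I' ⊆ I \ J` and `J' ⊆ J \ I` which intertwine (in either order) under some
cyclic ordering. -/
def CycLIntertwines {n : ℕ} (l : ℕ) (I J : Finset (ZMod n)) : Prop :=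
  ∃ I' J' : Finset (ZMod n), I' ⊆ I \ J ∧ J' ⊆ J \ I ∧ I'.card = l ∧ J'.card = l ∧
    (CycIntertwines I' J' ∨ CycIntertwines J' I')

/-- The set of left endpoints of `S ⊆ ℤ/n`: elements of `S` whose predecessor is not
in `S`. -/
def leftEnd {n : ℕ} (S : Finset (ZMod n)) : Finset (ZMod n) :=
  S.filter fun x => x - 1 ∉ S

/-- The gap vector of a sorted list of positions: consecutive differences minus 2,
cyclically (arithmetic modulo `n`). -/
def phiList (n : ℕ) (L : List ℕ) : List ℕ :=
  (L.zip (L.rotate 1)).map fun p => (p.2 + n - p.1 - 2) % n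

/-- The map `φᵢ` of Definition 3.4: the gap vector of an `l`-subset of `ℤ/n`, listed in
the cyclic order starting at `i`. -/
def phi {n : ℕ} (i : ZMod n) (T : Finset (ZMod n)) : List ℕ :=
  phiList n ((T.image (ord i)).sort (· ≤ ·))

/-- A slice: a non-intertwining collection of `C(n-l-1, l-1)` `l`-subsets of `ℤ/n`, each
with cyclic gaps at least 2, such that for some `i` the gap-vector map `φᵢ` is a bijection
onto the `l`-tuples of nonnegative integers summing to `n - 2l`. -/
def IsSlice (n l : ℕ) (𝒯 : Finset (Finset (ZMod n))) : Prop :=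
  𝒯.card = (n - l - 1).choose (l - 1) ∧
    (∀ T ∈ 𝒯, T.card = l) ∧
    (∀ T ∈ 𝒯, ∀ x ∈ T, x + 1 ∉ T) ∧
    (∀ T ∈ 𝒯, ∀ T' ∈ 𝒯, ¬ CycIntertwines T T') ∧
    ∃ i : ZMod n, Set.BijOn (phi i) ↑𝒯
      {L : List ℕ | L.length = l ∧ L.sum = n - 2 * l}

/-- `C_k(𝒯)`: the `k`-subsets of `ℤ/n` which are `l`-ple intervals whose set of left
endpoints belongs to `𝒯`. -/
def Ck (n k : ℕ) (𝒯 : Finset (Finset (ZMod n))) : Set (Finset (ZMod n)) :=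
  {S : Finset (ZMod n) | S.card = k ∧ leftEnd S ∈ 𝒯}

set_option linter.unusedSectionVars false

section Aux
variable {n : ℕ} [NeZero n]

lemma ord_lt (c x : ZMod n) : ord c x < n := ZMod.val_lt _

lemma ord_inj {c x y : ZMod n} (h : ord c x = ord c y) : x = y := by
  have := ZMod.val_injective n h
  exact sub_left_inj.mp this

lemma ord_self (c : ZMod n) : ord c c = 0 := by simp [ord]

lemma ord_eq_zero_iff {c x : ZMod n} : ord c x = 0 ↔ x = c := by
  unfold ord
  rw [ZMod.val_eq_zero, sub_eq_zero]

lemma cast_ord (c x : ZMod n) : ((ord c x : ℕ) : ZMod n) = x - c := ZMod.natCast_zmod_val _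

lemma ord_add_cast (c : ZMod n) {v : ℕ} (h : v < n) : ord c (c + (v : ZMod n)) = v := by
  simp [ord, ZMod.val_cast_of_lt h]

lemma ord_sub_one {c x : ZMod n} (h : 0 < ord c x) : ord c (x - 1) = ord c x - 1 := by
  have h1 : (x - 1) - c = ((ord c x - 1 : ℕ) : ZMod n) := by
    rw [Nat.cast_sub h, cast_ord]; push_cast; ring
  show (x - 1 - c).val = _
  rw [h1, ZMod.val_cast_of_lt (lt_of_le_of_lt (Nat.sub_le _ _) (ord_lt c x))]

lemma ord_rebase_le {c c' z : ZMod n} (h : ord c c' ≤ ord c z) :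
    ord c' z = ord c z - ord c c' := by
  have h1 : z - c' = ((ord c z - ord c c' : ℕ) : ZMod n) := by
    rw [Nat.cast_sub h, cast_ord, cast_ord]; ring
  show (z - c').val = _
  rw [h1, ZMod.val_cast_of_lt (lt_of_le_of_lt (Nat.sub_le _ _) (ord_lt c z))]

lemma ord_rebase_gt {c c' z : ZMod n} (h : ord c z < ord c c') :
    ord c' z = ord c z + n - ord c c' := by
  have hc' := ord_lt c c'
  have hz := ord_lt c z
  have hle : ord c c' ≤ ord c z + n := by omega
  have h1 : z - c' = ((ord c z + n - ord c c' : ℕ) : ZMod n) := by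
    rw [Nat.cast_sub hle, Nat.cast_add, cast_ord, cast_ord, ZMod.natCast_self]; ring
  show (z - c').val = _
  rw [h1, ZMod.val_cast_of_lt (by omega)]

lemma exists_leftEnd_aux (S : Finset (ZMod n)) (c : ZMod n) :
    ∀ px : ℕ, ∀ x ∈ S, ord c x = px → ∀ y ∉ S, ord c y < px →
      ∃ lam ∈ leftEnd S, ord c y < ord c lam ∧ ord c lam ≤ px := by
  intro px
  induction px using Nat.strong_induction_on with
  | _ px ih =>
    intro x hx hpx y hy hylt
    by_cases hx1 : x - 1 ∈ S
    · have hpos : 0 < px := by omega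
      have hxpos : 0 < ord c x := hpx ▸ hpos
      have hor : ord c (x - 1) = px - 1 := by rw [ord_sub_one hxpos, hpx]
      have hyne : ord c y ≠ px - 1 := by
        intro hcon
        have : y = x - 1 := ord_inj (by rw [hcon, ← hor])
        exact hy (this ▸ hx1)
      obtain ⟨lam, hl1, hl2, hl3⟩ :=
        ih (px - 1) (by omega) (x - 1) hx1 hor y hy (by omega)
      exact ⟨lam, hl1, hl2, by omega⟩
    · exact ⟨x, Finset.mem_filter.mpr ⟨hx, hx1⟩, hpx ▸ hylt, hpx ▸ le_refl _⟩

lemma exists_leftEnd {S : Finset (ZMod n)} {c x y : ZMod n} (hx : x ∈ S) (hy : y ∉ S)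
    (h : ord c y < ord c x) :
    ∃ lam ∈ leftEnd S, ord c y < ord c lam ∧ ord c lam ≤ ord c x :=
  exists_leftEnd_aux S c (ord c x) x hx rfl y hy h

end Aux
set_option linter.unusedSectionVars false

lemma zip_map_flat {α β : Type*} (f : α → β) :
    ∀ (L1 L2 : List α),
      ((L1.map f).zip (L2.map f)).flatMap (fun p => [p.1, p.2]) =
        (L1.zip L2).flatMap fun p => [f p.1, f p.2]
  | [], _ => by simp
  | _ :: _, [] => by simp
  | a :: t1, b :: t2 => by simp [zip_map_flat f t1 t2]

lemma left_sublist {α β : Type*} (f g : α → β) :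
    ∀ (L1 L2 : List α), L1.length = L2.length →
      List.Sublist (L1.map f) ((L1.zip L2).flatMap fun p => [f p.1, g p.2])
  | [], _, _ => by simp
  | a :: t1, [], h => by simp at h
  | a :: t1, b :: t2, h => by
    simpa using ((left_sublist f g t1 t2 (by simpa using h)).cons (g b)).cons₂ (f a)

lemma right_sublist {α β : Type*} (f g : α → β) :
    ∀ (L1 L2 : List α), L1.length = L2.length →
      List.Sublist (L2.map g) ((L1.zip L2).flatMap fun p => [f p.1, g p.2])
  | [], L2, h => by simp [(List.length_eq_zero_iff.mp h.symm)]
  | a :: t1, [], h => by simp at h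
  | a :: t1, b :: t2, h => by
    simpa using ((right_sublist f g t1 t2 (by simpa using h)).cons₂ (g b)).cons (f a)

lemma flatMap_ord_eq_map {α β : Type*} (f : α → β) (qs : List (α × α)) :
    (qs.flatMap fun p => [f p.1, f p.2]) = (qs.flatMap fun p => [p.1, p.2]).map f := by
  induction qs with
  | nil => simp
  | cons q t ih => simp [ih]

lemma chain'_mono_mem {α : Type*} {L : List α} {f g : α → ℕ}
    (h : List.Chain' (· < ·) (L.map f))
    (hfg : ∀ a ∈ L, ∀ b ∈ L, f a < f b → g a < g b) :
    List.Chain' (· < ·) (L.map g) := by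
  unfold List.Chain' at h ⊢
  rw [List.isChain_iff_pairwise] at h ⊢
  rw [List.pairwise_map] at h ⊢
  exact h.imp_of_mem fun ha hb => hfg _ ha _ hb

section Build
variable {n : ℕ} [NeZero n]

lemma build (I J : Finset (ZMod n)) (c : ZMod n) :
    ∀ qs : List (ZMod n × ZMod n),
      (∀ p ∈ qs, p.1 ∈ I ∧ p.1 ∉ J ∧ p.2 ∈ J ∧ p.2 ∉ I) →
      ∀ y : ZMod n, y ∉ I →
      List.Chain' (· < ·) (ord c y :: qs.flatMap fun p => [ord c p.1, ord c p.2]) →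
      ∃ ls ms : List (ZMod n), ls.length = qs.length ∧ ms.length = qs.length ∧
        (∀ x ∈ ls, x ∈ leftEnd I) ∧ (∀ x ∈ ms, x ∈ leftEnd J) ∧
        List.Chain' (· < ·)
          (ord c y :: (ls.zip ms).flatMap fun p => [ord c p.1, ord c p.2])
  | [] => fun _ y _ _ => ⟨[], [], rfl, rfl, by simp, by simp, List.isChain_singleton _⟩
  | q :: rest => fun hmem y hyI hch => by
    obtain ⟨haI, haJ, hbJ, hbI⟩ := hmem q (List.mem_cons_self)
    simp only [List.flatMap_cons] at hch
    have h_ya : ord c y < ord c q.1 := (List.isChain_cons_cons.mp hch).1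
    have hch2 := (List.isChain_cons_cons.mp hch).2
    have h_ab : ord c q.1 < ord c q.2 := (List.isChain_cons_cons.mp hch2).1
    have hch3 := (List.isChain_cons_cons.mp hch2).2
    obtain ⟨lam, hlamE, hlam1, hlam2⟩ := exists_leftEnd haI hyI h_ya
    obtain ⟨mu, hmuE, hmu1, hmu2⟩ := exists_leftEnd hbJ haJ h_ab
    obtain ⟨ls, ms, hlen1, hlen2, hlsE, hmsE, hchR⟩ :=
      build I J c rest (fun p hp => hmem p (List.mem_cons_of_mem _ hp)) q.2 hbI hch3
    refine ⟨lam :: ls, mu :: ms, by simp [hlen1], by simp [hlen2], ?_, ?_, ?_⟩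
    · intro x hx
      rcases List.mem_cons.mp hx with h | h
      · exact h ▸ hlamE
      · exact hlsE x h
    · intro x hx
      rcases List.mem_cons.mp hx with h | h
      · exact h ▸ hmuE
      · exact hmsE x h
    · simp only [List.zip_cons_cons, List.flatMap_cons]
      refine List.isChain_cons_cons.mpr ⟨hlam1, List.isChain_cons_cons.mpr ⟨by omega, ?_⟩⟩
      have hh := List.isChain_cons.mp hchR
      exact List.isChain_cons.mpr ⟨fun z hz => by have := hh.1 z hz; omega, hh.2⟩
end Build

section Main
variable {n : ℕ} [NeZero n]

lemma main_step {l : ℕ} (hl : 0 < l) (I J I' J' : Finset (ZMod n))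
    (hI' : I' ⊆ I \ J) (hJ' : J' ⊆ J \ I)
    (hcI' : I'.card = l) (hcJ' : J'.card = l)
    (hLI : (leftEnd I).card = l) (hLJ : (leftEnd J).card = l)
    (h : CycIntertwines I' J') : CycIntertwines (leftEnd I) (leftEnd J) := by
  obtain ⟨i, hcard, hch⟩ := h
  have hinj : Function.Injective (ord (n := n) i) := fun a b hab => ord_inj hab
  set sA := ((I'.image (ord i)).sort (· ≤ ·)) with hsA
  set sB := ((J'.image (ord i)).sort (· ≤ ·)) with hsB
  have hlenA : sA.length = l := by
    rw [hsA, Finset.length_sort, Finset.card_image_of_injective _ hinj, hcI']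
  have hlenB : sB.length = l := by
    rw [hsB, Finset.length_sort, Finset.card_image_of_injective _ (fun a b hab => ord_inj hab), hcJ']
  set qs := (sA.zip sB).map (fun p => ((i + (p.1 : ZMod n)), (i + (p.2 : ZMod n)))) with hqs
  have hmem : ∀ p ∈ qs, p.1 ∈ I' ∧ p.2 ∈ J' := by
    intro p hp
    rw [hqs, List.mem_map] at hp
    obtain ⟨q, hq, rfl⟩ := hp
    obtain ⟨h1, h2⟩ := List.of_mem_zip (show (q.1, q.2) ∈ sA.zip sB from hq)
    obtain ⟨a, ha, hav⟩ := Finset.mem_image.mp ((Finset.mem_sort (· ≤ ·)).mp h1)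
    obtain ⟨b, hb, hbv⟩ := Finset.mem_image.mp ((Finset.mem_sort (· ≤ ·)).mp h2)
    constructor
    · show i + (q.1 : ZMod n) ∈ I'
      have : i + ((q.1 : ℕ) : ZMod n) = a := by rw [← hav, cast_ord]; ring
      rw [this]; exact ha
    · show i + (q.2 : ZMod n) ∈ J'
      have : i + ((q.2 : ℕ) : ZMod n) = b := by rw [← hbv, cast_ord]; ring
      rw [this]; exact hb
  have hmemIJ : ∀ p ∈ qs, p.1 ∈ I ∧ p.1 ∉ J ∧ p.2 ∈ J ∧ p.2 ∉ I := by
    intro p hp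
    obtain ⟨h1, h2⟩ := hmem p hp
    obtain ⟨h3, h4⟩ := Finset.mem_sdiff.mp (hI' h1)
    obtain ⟨h5, h6⟩ := Finset.mem_sdiff.mp (hJ' h2)
    exact ⟨h3, h4, h5, h6⟩
  have hflat : (qs.flatMap fun p => [ord i p.1, ord i p.2])
      = (sA.zip sB).flatMap fun p => [p.1, p.2] := by
    rw [hqs, List.flatMap_map]
    apply List.flatMap_congr
    intro q hq
    obtain ⟨h1, h2⟩ := List.of_mem_zip (show (q.1, q.2) ∈ sA.zip sB from hq)
    obtain ⟨a, _, hav⟩ := Finset.mem_image.mp ((Finset.mem_sort (· ≤ ·)).mp h1)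
    obtain ⟨b, _, hbv⟩ := Finset.mem_image.mp ((Finset.mem_sort (· ≤ ·)).mp h2)
    have hq1 : q.1 < n := hav ▸ ord_lt i a
    have hq2 : q.2 < n := hbv ▸ ord_lt i b
    show [ord i (i + (q.1 : ZMod n)), ord i (i + (q.2 : ZMod n))] = [q.1, q.2]
    rw [ord_add_cast i hq1, ord_add_cast i hq2]
  set F := qs.flatMap fun p => [p.1, p.2] with hF
  have CHi : List.Chain' (· < ·) (F.map (ord i)) := by
    rw [hF, ← flatMap_ord_eq_map, hflat]; exact hch
  have hqlen : qs.length = l := by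
    rw [hqs, List.length_map, List.length_zip, hlenA, hlenB, min_self]
  obtain ⟨q0, qrest, hq0⟩ : ∃ q0 qrest, qs = q0 :: qrest := by
    cases hc : qs with
    | nil => rw [hc] at hqlen; simp at hqlen; omega
    | cons q0 qrest => exact ⟨q0, qrest, rfl⟩
  obtain ⟨qsI, qlast, hqL⟩ : ∃ qsI qlast, qs = qsI ++ [qlast] := by
    rcases List.eq_nil_or_concat qs with hc | ⟨L, b, hc⟩
    · rw [hc] at hqlen; simp at hqlen; omega
    · exact ⟨L, b, by rw [hc]; simp⟩
  obtain ⟨ha1I, ha1J, hb1J, hb1I⟩ := hmemIJ q0 (hq0 ▸ List.mem_cons_self)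
  have hqlastqs : qlast ∈ qs := by rw [hqL]; simp
  have hblI : qlast.2 ∉ I := (hmemIJ qlast hqlastqs).2.2.2
  have P : List.Pairwise (· < ·) (F.map (ord i)) := List.isChain_iff_pairwise.mp CHi
  have hF0 : F = q0.1 :: q0.2 :: (qrest.flatMap fun p => [p.1, p.2]) := by
    rw [hF, hq0]; simp
  have hF1 : F = (qsI.flatMap fun p => [p.1, p.2]) ++ [qlast.1, qlast.2] := by
    rw [hF, hqL]; simp
  have ha1F : q0.1 ∈ F := by rw [hF0]; simp
  have hmin : ∀ z ∈ F, ord i q0.1 ≤ ord i z := by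
    intro z hz
    rw [hF0] at hz
    rcases List.mem_cons.mp hz with h | h
    · rw [h]
    · have P' := hF0 ▸ P
      rw [List.map_cons, List.pairwise_cons] at P'
      exact le_of_lt (P'.1 (ord i z) (List.mem_map_of_mem h))
  have hmax : ∀ z ∈ F, ord i z ≤ ord i qlast.2 := by
    intro z hz
    have P' := hF1 ▸ P
    rw [List.map_append, List.pairwise_append] at P'
    rw [hF1] at hz
    rcases List.mem_append.mp hz with h | h
    · exact le_of_lt (P'.2.2 (ord i z) (List.mem_map_of_mem h) (ord i qlast.2) (by simp))
    · rcases List.mem_cons.mp h with h' | h'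
      · rw [h']
        have := P'.2.1
        rw [List.map_cons, List.map_cons, List.pairwise_cons] at this
        exact le_of_lt (this.1 (ord i qlast.2) (by simp))
      · rw [List.mem_singleton.mp h']
  -- find lam1
  have ha1bl : q0.1 ≠ qlast.2 := fun h => hblI (h ▸ ha1I)
  have h0 : ord qlast.2 qlast.2 < ord qlast.2 q0.1 := by
    rw [ord_self]
    exact Nat.pos_of_ne_zero (fun h => ha1bl (ord_eq_zero_iff.mp h))
  obtain ⟨lam1, hlam1E, hlam1a, hlam1b⟩ := exists_leftEnd ha1I hblI h0
  rw [ord_self] at hlam1a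
  have hlam1I : lam1 ∈ I := (Finset.mem_filter.mp hlam1E).1
  -- rebase to lam1
  have hD : ord i lam1 ≠ ord i qlast.2 := fun h => hblI (ord_inj h ▸ hlam1I)
  have CHlam : List.Chain' (· < ·) (F.map (ord lam1)) := by
    rcases lt_or_gt_of_ne hD with hlt | hgt
    · have ha1blo : ord i q0.1 < ord i qlast.2 :=
        lt_of_le_of_ne (hmax q0.1 ha1F) (fun h => hblI (ord_inj h ▸ ha1I))
      have e1 : ord qlast.2 lam1 = ord i lam1 + n - ord i qlast.2 := ord_rebase_gt hlt
      have e2 : ord qlast.2 q0.1 = ord i q0.1 + n - ord i qlast.2 := ord_rebase_gt ha1blo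
      have hea1 : ord i lam1 ≤ ord i q0.1 := by
        have hbln := ord_lt i qlast.2; omega
      apply chain'_mono_mem CHi
      intro x hx y' hy' hxy
      have hx1 := le_trans hea1 (hmin x hx)
      have hy1 := le_trans hea1 (hmin y' hy')
      rw [ord_rebase_le hx1, ord_rebase_le hy1]
      omega
    · apply chain'_mono_mem CHi
      intro x hx y' hy' hxy
      have hx1 := lt_of_le_of_lt (hmax x hx) hgt
      have hy1 := lt_of_le_of_lt (hmax y' hy') hgt
      rw [ord_rebase_gt hx1, ord_rebase_gt hy1]
      have := ord_lt i lam1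
      omega
  have CHlam' : List.Chain' (· < ·) (qs.flatMap fun p => [ord lam1 p.1, ord lam1 p.2]) := by
    rw [flatMap_ord_eq_map]; exact CHlam
  rw [hq0] at CHlam'
  simp only [List.flatMap_cons] at CHlam'
  have h_ab1 : ord lam1 q0.1 < ord lam1 q0.2 := (List.isChain_cons_cons.mp CHlam').1
  have hchtail := (List.isChain_cons_cons.mp CHlam').2
  obtain ⟨mu1, hmu1E, hmu1a, hmu1b⟩ := exists_leftEnd (c := lam1) hb1J ha1J h_ab1
  obtain ⟨ls, ms, hl1, hl2, hlsE, hmsE, CHR⟩ :=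
    build I J lam1 qrest (fun p hp => hmemIJ p (hq0 ▸ List.mem_cons_of_mem _ hp)) q0.2 hb1I hchtail
  set Ls := lam1 :: ls with hLs
  set Ms := mu1 :: ms with hMs
  have hqrlen : qrest.length = l - 1 := by
    have := hqlen; rw [hq0] at this; simp at this; omega
  have hLslen : Ls.length = l := by rw [hLs]; simp [hl1, hqrlen]; omega
  have hMslen : Ms.length = l := by rw [hMs]; simp [hl2, hqrlen]; omega
  have CHF : List.Chain' (· < ·) ((Ls.zip Ms).flatMap fun p => [ord lam1 p.1, ord lam1 p.2]) := by
    rw [hLs, hMs]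
    simp only [List.zip_cons_cons, List.flatMap_cons]
    refine List.isChain_cons_cons.mpr ⟨by rw [ord_self]; omega, ?_⟩
    have hh := List.isChain_cons.mp CHR
    exact List.isChain_cons.mpr ⟨fun z hz => by have := hh.1 z hz; omega, hh.2⟩
  have hLsE : ∀ x ∈ Ls, x ∈ leftEnd I := by
    intro x hx
    rcases List.mem_cons.mp hx with h | h
    · exact h ▸ hlam1E
    · exact hlsE x h
  have hMsE : ∀ x ∈ Ms, x ∈ leftEnd J := by
    intro x hx
    rcases List.mem_cons.mp hx with h | h
    · exact h ▸ hmu1E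
    · exact hmsE x h
  have PF := List.isChain_iff_pairwise.mp CHF
  have PLs : List.Pairwise (· < ·) (Ls.map (ord lam1)) :=
    List.Pairwise.sublist (left_sublist _ _ Ls Ms (by rw [hLslen, hMslen])) PF
  have PMs : List.Pairwise (· < ·) (Ms.map (ord lam1)) :=
    List.Pairwise.sublist (right_sublist _ _ Ls Ms (by rw [hLslen, hMslen])) PF
  have hndL : (Ls.map (ord lam1)).Nodup := PLs.imp (fun h => Nat.ne_of_lt h)
  have hndM : (Ms.map (ord lam1)).Nodup := PMs.imp (fun h => Nat.ne_of_lt h)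
  have hndLs : Ls.Nodup := List.Nodup.of_map _ hndL
  have hndMs : Ms.Nodup := List.Nodup.of_map _ hndM
  have hLsF : Ls.toFinset = leftEnd I := by
    apply Finset.eq_of_subset_of_card_le
    · intro x hx; exact hLsE x (List.mem_toFinset.mp hx)
    · rw [hLI, List.toFinset_card_of_nodup hndLs, hLslen]
  have hMsF : Ms.toFinset = leftEnd J := by
    apply Finset.eq_of_subset_of_card_le
    · intro x hx; exact hMsE x (List.mem_toFinset.mp hx)
    · rw [hLJ, List.toFinset_card_of_nodup hndMs, hMslen]
  have himgL : (leftEnd I).image (ord lam1) = (Ls.map (ord lam1)).toFinset := by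
    rw [← hLsF]; ext z; simp
  have himgM : (leftEnd J).image (ord lam1) = (Ms.map (ord lam1)).toFinset := by
    rw [← hMsF]; ext z; simp
  have hsortL : ((leftEnd I).image (ord lam1)).sort (· ≤ ·) = Ls.map (ord lam1) := by
    rw [himgL]
    exact (List.toFinset_sort (· ≤ ·) hndL).mpr (PLs.imp fun h => le_of_lt h)
  have hsortM : ((leftEnd J).image (ord lam1)).sort (· ≤ ·) = Ms.map (ord lam1) := by
    rw [himgM]
    exact (List.toFinset_sort (· ≤ ·) hndM).mpr (PMs.imp fun h => le_of_lt h)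
  refine ⟨lam1, ?_, ?_⟩
  · rw [Finset.card_image_of_injective _ (fun a b hab => ord_inj hab),
      Finset.card_image_of_injective _ (fun a b hab => ord_inj hab), hLI, hLJ]
  · rw [hsortL, hsortM, zip_map_flat]
    exact CHF

end Main

/-- Theorem 3.8 (non-intertwining): if `𝒯` is a slice of `l`-subsets of `[n]` and
`l ≤ k ≤ n - l`, then the collection `C_k(𝒯)` is pairwise non-`l`-intertwining. -/
theorem Ck_of_slice_non_lIntertwining (n l k : ℕ) (hn : 0 < n) (hl : 2 ≤ l)
    (hlk : l ≤ k) (hkn : k ≤ n - l) (𝒯 : Finset (Finset (ZMod n)))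
    (h𝒯 : IsSlice n l 𝒯) :
    ∀ I ∈ Ck n k 𝒯, ∀ J ∈ Ck n k 𝒯, ¬ CycLIntertwines l I J := by
  haveI : NeZero n := ⟨hn.ne'⟩
  intro I hI J hJ hcon
  obtain ⟨I', J', hI', hJ', hcI, hcJ, hor⟩ := hcon
  obtain ⟨-, hcardT, -, hnon, -⟩ := h𝒯
  obtain ⟨hIc, hIT⟩ := hI
  obtain ⟨hJc, hJT⟩ := hJ
  have hLI : (leftEnd I).card = l := hcardT _ hIT
  have hLJ : (leftEnd J).card = l := hcardT _ hJT
  have hl0 : 0 < l := by omega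
  rcases hor with h | h
  · exact hnon _ hIT _ hJT (main_step hl0 I J I' J' hI' hJ' hcI hcJ hLI hLJ h)
  · exact hnon _ hJT _ hIT (main_step hl0 J I J' I' hJ' hI' hcJ hcI hLJ hLI h)
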